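/- Let L ≥ 1 be an integer and let η : {1,…,L} → {−1,+1} be any sign sequence. Then there exist unique real numbers a₀, a₁, …, a_{L+1} satisfying the sign recurrence for η together with the boundary conditions a₀ = a_{L+1} = 1. -/

import Mathlib

/-- Solution of the two-term recurrence with initial values `x, y`. -/
def sseq (η : ℕ → ℝ) (x y : ℝ) : ℕ → ℝ
  | 0 => x
  | 1 => y
  | n + 2 => 2 * η (n + 1) * sseq η x y (n + 1) - sseq η x y n

lemma sseq_lin (η : ℕ → ℝ) (x y : ℝ) :
    ∀ n, sseq η x y n = x * sseq η 1 0 n + y * sseq η 0 1 n := by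
  intro n
  induction n using Nat.strong_induction_on with
  | _ n ih =>
    match n with
    | 0 => simp [sseq]
    | 1 => simp [sseq]
    | n + 2 =>
      rw [show n + 2 = n + 2 from rfl]
      simp only [sseq]
      rw [ih (n + 1) (by omega), ih n (by omega)]
      ring

lemma sseq_grow (L : ℕ) (η : ℕ → ℝ)
    (hη : ∀ i, 1 ≤ i → i ≤ L → η i = 1 ∨ η i = -1) :
    ∀ n, n ≤ L → |sseq η 0 1 n| + 1 ≤ |sseq η 0 1 (n + 1)| := by
  intro n
  induction n with
  | zero => intro _; simp [sseq]
  | succ n ih =>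
    intro hn
    have hih := ih (by omega)
    set b := sseq η 0 1 (n + 1) with hb
    set c := sseq η 0 1 n with hc
    have hrec : sseq η 0 1 (n + 2) = 2 * η (n + 1) * b - c := rfl
    have habs : |2 * η (n + 1) * b| - |c| ≤ |2 * η (n + 1) * b - c| :=
      abs_sub_abs_le_abs_sub _ _
    rcases hη (n + 1) (by omega) hn with h | h <;>
    · rw [h] at habs
      rw [hrec]
      have h2 : |(2 : ℝ) * b| = 2 * |b| := by
        rw [abs_mul]; norm_num
      have h3 : |(-2 : ℝ) * b| = 2 * |b| := by
        rw [abs_mul]; norm_num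
      rw [h]
      first
      | (rw [show (2 : ℝ) * 1 * b = 2 * b by ring] at habs ⊢; linarith [habs, abs_nonneg b, h2])
      | (rw [show (2 : ℝ) * (-1) * b = (-2) * b by ring] at habs ⊢; linarith [habs, abs_nonneg b, h3])

theorem sign_recurrence_exists_unique_boundary_one (L : ℕ) (hL : 1 ≤ L)
    (η : ℕ → ℝ) (hη : ∀ i, 1 ≤ i → i ≤ L → η i = 1 ∨ η i = -1) :
    ∃ a : ℕ → ℝ,
      (a 0 = 1 ∧ a (L + 1) = 1 ∧
        ∀ i, 1 ≤ i → i ≤ L → η i * a i = (a (i - 1) + a (i + 1)) / 2) ∧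
      ∀ a' : ℕ → ℝ,
        (a' 0 = 1 ∧ a' (L + 1) = 1 ∧
          ∀ i, 1 ≤ i → i ≤ L → η i * a' i = (a' (i - 1) + a' (i + 1)) / 2) →
        ∀ i, i ≤ L + 1 → a' i = a i := by
  set c : ℕ → ℝ := sseq η 1 0 with hcdef
  set b : ℕ → ℝ := sseq η 0 1 with hbdef
  have hbne : b (L + 1) ≠ 0 := by
    have := sseq_grow L η hη L le_rfl
    have h0 : (0 : ℝ) ≤ |sseq η 0 1 L| := abs_nonneg _
    intro h
    rw [hbdef] at h
    rw [h] at this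
    simp at this
    linarith
  set y : ℝ := (1 - c (L + 1)) / b (L + 1) with hydef
  set a : ℕ → ℝ := sseq η 1 y with hadef
  have ha_lin : ∀ n, a n = c n + y * b n := by
    intro n
    have := sseq_lin η 1 y n
    simpa [hadef, hcdef, hbdef] using this
  have hc0 : c 0 = 1 := rfl
  have hb0 : b 0 = 0 := rfl
  have ha0 : a 0 = 1 := rfl
  have haL : a (L + 1) = 1 := by
    rw [ha_lin, hydef]
    field_simp
    ring
  have hrec : ∀ i, 1 ≤ i → i ≤ L → η i * a i = (a (i - 1) + a (i + 1)) / 2 := by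
    intro i hi _
    obtain ⟨n, rfl⟩ : ∃ n, i = n + 1 := ⟨i - 1, by omega⟩
    have : a (n + 2) = 2 * η (n + 1) * a (n + 1) - a n := rfl
    simp only [Nat.add_sub_cancel]
    rw [show n + 1 + 1 = n + 2 from rfl, this]
    ring
  refine ⟨a, ⟨ha0, haL, hrec⟩, ?_⟩
  rintro a' ⟨ha'0, ha'L, ha'rec⟩ i hi
  -- a' agrees with sseq η 1 (a' 1)
  have key : ∀ n, n ≤ L + 1 → a' n = sseq η 1 (a' 1) n := by
    intro n
    induction n using Nat.strong_induction_on with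
    | _ n ih =>
      match n with
      | 0 => intro _; simpa [sseq] using ha'0
      | 1 => intro _; simp [sseq]
      | n + 2 =>
        intro hn
        have h := ha'rec (n + 1) (by omega) (by omega)
        have : a' (n + 2) = 2 * η (n + 1) * a' (n + 1) - a' n := by
          simp only [Nat.add_sub_cancel] at h
          linarith [h]
        rw [this, ih (n + 1) (by omega) (by omega), ih n (by omega) (by omega)]
        rfl
  have h1 : a' 1 = y := by
    have hL1 := key (L + 1) le_rfl
    rw [ha'L] at hL1
    have := sseq_lin η 1 (a' 1) (L + 1)
    rw [← hL1] at this
    rw [← hcdef, ← hbdef] at this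
    rw [hydef]
    field_simp
    linarith [this]
  have := key i hi
  rw [this, h1]
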